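/- Let H be a finite-dimensional Hopf algebra with basis (e_i) and dual basis (e^i). In the Heisenberg double H(H), the canonical element T = Σ_i (ε ⊗ e_i) ⊗ (e^i ⊗ 1) ∈ H(H) ⊗ H(H) satisfies the pentagon equation T_{12} T_{13} T_{23} = T_{23} T_{12} in H(H)^{⊗3}. -/

import Mathlib

open Coalgebra TensorProduct

namespace HeisenbergDouble

variable (K H : Type*) [Field K] [Ring H] [HopfAlgebra K H] [FiniteDimensional K H]

/-- The convolution product on the dual `H* = Module.Dual K H`, as a bilinear map:
`(f · g) x = f x₍₁₎ * g x₍₂₎`. -/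
noncomputable def dmulB : Module.Dual K H →ₗ[K] Module.Dual K H →ₗ[K] Module.Dual K H :=
  LinearMap.mk₂ K
    (fun f g => LinearMap.mul' K K ∘ₗ TensorProduct.map f g ∘ₗ Coalgebra.comul (R := K))
    (fun f f' g => by (try dsimp only); rw [TensorProduct.map_add_left, LinearMap.add_comp, LinearMap.comp_add])
    (fun c f g => by (try dsimp only); rw [TensorProduct.map_smul_left, LinearMap.smul_comp, LinearMap.comp_smul])
    (fun f g g' => by (try dsimp only); rw [TensorProduct.map_add_right, LinearMap.add_comp, LinearMap.comp_add])
    (fun c f g => by (try dsimp only); rw [TensorProduct.map_smul_right, LinearMap.smul_comp, LinearMap.comp_smul])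

/-- The left action of `H` on `H*` given by `(a ⇀ g) x = g (x * a)`, as a bilinear map. -/
noncomputable def actB : H →ₗ[K] Module.Dual K H →ₗ[K] Module.Dual K H :=
  LinearMap.mk₂ K (fun a g => g ∘ₗ LinearMap.mulRight K a)
    (fun a a' g => by ext x; simp [mul_add])
    (fun c a g => by ext x; simp [mul_smul_comm])
    (fun a g g' => by ext x; simp)
    (fun c a g => by ext x; simp)

/-- The underlying vector space `H* ⊗ H` of the Heisenberg double. -/
abbrev D := Module.Dual K H ⊗[K] H

/-- The multiplication of the Heisenberg double, as a linear map on `D ⊗ D`, implementing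
`(f ⊗ a) · (g ⊗ b) = f · (a₍₁₎ ⇀ g) ⊗ a₍₂₎ * b`. -/
noncomputable def hmulT : D K H ⊗[K] D K H →ₗ[K] D K H :=
  LinearMap.rTensor H
      (TensorProduct.lift (dmulB K H) ∘ₗ
        LinearMap.lTensor (Module.Dual K H) (TensorProduct.lift (actB K H)) ∘ₗ
        (TensorProduct.assoc K (Module.Dual K H) H (Module.Dual K H)).toLinearMap) ∘ₗ
    LinearMap.lTensor ((Module.Dual K H ⊗[K] H) ⊗[K] Module.Dual K H) (LinearMap.mul' K H) ∘ₗ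
    (TensorProduct.tensorTensorTensorComm K (Module.Dual K H ⊗[K] H) H
        (Module.Dual K H) H).toLinearMap ∘ₗ
    LinearMap.rTensor (Module.Dual K H ⊗[K] H)
      ((TensorProduct.assoc K (Module.Dual K H) H H).symm.toLinearMap ∘ₗ
        LinearMap.lTensor (Module.Dual K H) (Coalgebra.comul (R := K)))

/-- The product of two elements of the Heisenberg double. -/
noncomputable def hmul (x y : D K H) : D K H := hmulT K H (x ⊗ₜ y)

/-- The unit `ε ⊗ 1` of the Heisenberg double. -/
noncomputable def hunit : D K H := (Coalgebra.counit (R := K) (A := H)) ⊗ₜ (1 : H)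

end HeisenbergDouble

namespace HeisenbergDouble

variable (K H : Type*) [Field K] [Ring H] [HopfAlgebra K H] [FiniteDimensional K H]

/-- The componentwise multiplication on `H(H) ⊗ H(H)`. -/
noncomputable def hmul2 (x y : D K H ⊗[K] D K H) : D K H ⊗[K] D K H :=
  (TensorProduct.map (hmulT K H) (hmulT K H) ∘ₗ
    (TensorProduct.tensorTensorTensorComm K (D K H) (D K H) (D K H) (D K H)).toLinearMap)
    (x ⊗ₜ y)

/-- The componentwise multiplication on `H(H) ⊗ H(H) ⊗ H(H)`. -/
noncomputable def hmul3 (x y : (D K H ⊗[K] D K H) ⊗[K] D K H) :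
    (D K H ⊗[K] D K H) ⊗[K] D K H :=
  (TensorProduct.map
      (TensorProduct.map (hmulT K H) (hmulT K H) ∘ₗ
        (TensorProduct.tensorTensorTensorComm K (D K H) (D K H) (D K H) (D K H)).toLinearMap)
      (hmulT K H) ∘ₗ
    (TensorProduct.tensorTensorTensorComm K (D K H ⊗[K] D K H) (D K H)
        (D K H ⊗[K] D K H) (D K H)).toLinearMap)
    (x ⊗ₜ y)

end HeisenbergDouble
namespace HeisenbergDouble
set_option maxHeartbeats 1000000
set_option synthInstance.maxHeartbeats 400000
set_option linter.unusedSectionVars false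

variable (K H : Type*) [Field K] [Ring H] [HopfAlgebra K H] [FiniteDimensional K H]

/-- Auxiliary bilinear map used to describe `hmulT` on simple tensors. -/
noncomputable def hmulAux (f g : Module.Dual K H) (c : H) : H ⊗[K] H →ₗ[K] D K H :=
  TensorProduct.lift <| LinearMap.mk₂ K
    (fun u v => dmulB K H f (actB K H u g) ⊗ₜ[K] (v * c))
    (fun u u' v => by simp [map_add, add_tmul])
    (fun s u v => by simp [map_smul, smul_tmul'])
    (fun u v v' => by simp [add_mul, tmul_add])
    (fun s u v => by simp [smul_mul_assoc, tmul_smul])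

lemma hmulAux_tmul (f g : Module.Dual K H) (c u v : H) :
    hmulAux K H f g c (u ⊗ₜ v) = dmulB K H f (actB K H u g) ⊗ₜ[K] (v * c) := rfl

lemma hmulT_tmul (f g : Module.Dual K H) (a c : H) :
    hmulT K H ((f ⊗ₜ a) ⊗ₜ (g ⊗ₜ c)) = hmulAux K H f g c (Coalgebra.comul a) := by
  have h : ∀ z : H ⊗[K] H,
      (LinearMap.rTensor H
        (TensorProduct.lift (dmulB K H) ∘ₗ
          LinearMap.lTensor (Module.Dual K H) (TensorProduct.lift (actB K H)) ∘ₗ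
          (TensorProduct.assoc K (Module.Dual K H) H (Module.Dual K H)).toLinearMap) ∘ₗ
        LinearMap.lTensor ((Module.Dual K H ⊗[K] H) ⊗[K] Module.Dual K H) (LinearMap.mul' K H) ∘ₗ
        (TensorProduct.tensorTensorTensorComm K (Module.Dual K H ⊗[K] H) H
            (Module.Dual K H) H).toLinearMap)
        (((TensorProduct.assoc K (Module.Dual K H) H H).symm (f ⊗ₜ z)) ⊗ₜ (g ⊗ₜ c))
        = hmulAux K H f g c z := by
    intro z
    induction z using TensorProduct.induction_on with
    | zero => simp
    | tmul u v =>
        simp [hmulAux, TensorProduct.tensorTensorTensorComm_tmul]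
        rfl
    | add x y hx hy => simp only [tmul_add, add_tmul, map_add, hx, hy]
  rw [hmulT]
  simp only [LinearMap.comp_apply, LinearEquiv.coe_coe, LinearMap.rTensor_tmul,
    LinearMap.lTensor_tmul]
  exact h _

end HeisenbergDouble
namespace HeisenbergDouble
set_option maxHeartbeats 1000000
set_option synthInstance.maxHeartbeats 400000
set_option linter.unusedSectionVars false

variable (K H : Type*) [Field K] [Ring H] [HopfAlgebra K H] [FiniteDimensional K H]

lemma actB_one (g : Module.Dual K H) : actB K H 1 g = g := by
  ext x; simp [actB]

lemma actB_counit (u : H) :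
    actB K H u (Coalgebra.counit (R := K)) =
      Coalgebra.counit (R := K) u • Coalgebra.counit (R := K) := by
  ext x
  simp [actB, smul_eq_mul, mul_comm]

lemma dmulB_apply (f g : Module.Dual K H) (x : H) :
    dmulB K H f g x = LinearMap.mul' K K (TensorProduct.map f g (Coalgebra.comul x)) := by
  simp [dmulB]

lemma dmulB_counit_left (g : Module.Dual K H) :
    dmulB K H (Coalgebra.counit (R := K)) g = g := by
  ext x
  rw [dmulB_apply, ← LinearMap.lTensor_comp_rTensor, LinearMap.comp_apply,
    Coalgebra.rTensor_counit_comul]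
  simp

lemma dmulB_counit_right (f : Module.Dual K H) :
    dmulB K H f (Coalgebra.counit (R := K)) = f := by
  ext x
  rw [dmulB_apply, ← LinearMap.rTensor_comp_lTensor, LinearMap.comp_apply,
    Coalgebra.lTensor_counit_comul]
  simp

lemma hmulT_one_left (f g : Module.Dual K H) (c : H) :
    hmulT K H ((f ⊗ₜ (1 : H)) ⊗ₜ (g ⊗ₜ c)) = dmulB K H f g ⊗ₜ c := by
  rw [hmulT_tmul, Bialgebra.comul_one, Algebra.TensorProduct.one_def, hmulAux_tmul,
    actB_one, one_mul]

lemma hmulT_unit_right (f : Module.Dual K H) (a : H) :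
    hmulT K H ((f ⊗ₜ a) ⊗ₜ hunit K H) = f ⊗ₜ a := by
  rw [hunit, hmulT_tmul]
  have h : ∀ z : H ⊗[K] H, hmulAux K H f (Coalgebra.counit (R := K)) 1 z
      = f ⊗ₜ[K] (TensorProduct.lid K H) ((Coalgebra.counit (R := K) (A := H)).rTensor H z) := by
    intro z
    induction z using TensorProduct.induction_on with
    | zero => simp
    | tmul u v =>
        rw [hmulAux_tmul, actB_counit, map_smul, dmulB_counit_right]
        simp [smul_tmul', tmul_smul]
    | add x y hx hy => simp only [map_add, tmul_add, hx, hy]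
  rw [h, Coalgebra.rTensor_counit_comul]
  simp

lemma hmulT_eps_eps (a c : H) :
    hmulT K H (((Coalgebra.counit (R := K) (A := H)) ⊗ₜ a) ⊗ₜ
        ((Coalgebra.counit (R := K) (A := H)) ⊗ₜ c)) =
      (Coalgebra.counit (R := K) (A := H)) ⊗ₜ (a * c) := by
  rw [hmulT_tmul]
  have h : ∀ z : H ⊗[K] H,
      hmulAux K H (Coalgebra.counit (R := K)) (Coalgebra.counit (R := K)) c z
      = (Coalgebra.counit (R := K) (A := H)) ⊗ₜ[K]
          ((TensorProduct.lid K H) ((Coalgebra.counit (R := K) (A := H)).rTensor H z) * c) := by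
    intro z
    induction z using TensorProduct.induction_on with
    | zero => simp
    | tmul u v =>
        rw [hmulAux_tmul, actB_counit, map_smul, dmulB_counit_right]
        simp [smul_tmul', tmul_smul, smul_mul_assoc]
    | add x y hx hy => simp only [map_add, tmul_add, add_mul, hx, hy]
  rw [h, Coalgebra.rTensor_counit_comul]
  simp

lemma hmulT_unit_left (g : Module.Dual K H) (c : H) :
    hmulT K H (hunit K H ⊗ₜ (g ⊗ₜ c)) = g ⊗ₜ c := by
  rw [hunit, hmulT_one_left, dmulB_counit_left]

end HeisenbergDouble
namespace HeisenbergDouble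
set_option maxHeartbeats 1000000
set_option synthInstance.maxHeartbeats 400000
set_option linter.unusedSectionVars false

variable (K H : Type*) [Field K] [Ring H] [HopfAlgebra K H] [FiniteDimensional K H]

/-- Auxiliary bilinear "insertion" map `x, v ↦ ((ε ⊗ x) ⊗ (φ ⊗ v)) ⊗ (ψ ⊗ 1)`. -/
noncomputable def gammaB (φ ψ : Module.Dual K H) :
    H →ₗ[K] H →ₗ[K] (D K H ⊗[K] D K H) ⊗[K] D K H :=
  LinearMap.mk₂ K
    (fun x v => (((Coalgebra.counit (R := K) (A := H)) ⊗ₜ x) ⊗ₜ (φ ⊗ₜ v)) ⊗ₜ (ψ ⊗ₜ (1 : H)))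
    (fun x x' v => by simp [tmul_add, add_tmul])
    (fun s x v => by simp [tmul_smul, ← smul_tmul'])
    (fun x v v' => by simp [tmul_add, add_tmul])
    (fun s x v => by simp [tmul_smul, ← smul_tmul'])

lemma gammaB_apply (φ ψ : Module.Dual K H) (x v : H) :
    gammaB K H φ ψ x v =
      (((Coalgebra.counit (R := K) (A := H)) ⊗ₜ x) ⊗ₜ (φ ⊗ₜ v)) ⊗ₜ (ψ ⊗ₜ (1 : H)) := rfl

variable {ι : Type*} [Fintype ι]

lemma sum_coord_smul {T : Type*} [AddCommMonoid T] [Module K T]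
    (b : Module.Basis ι K H) (G : H →ₗ[K] T) (w : H) :
    ∑ i, b.coord i w • G (b i) = G w := by
  simp_rw [Module.Basis.coord_apply, ← map_smul, ← map_sum, Module.Basis.sum_repr]

lemma sum_coord_smul_apply {T : Type*} [AddCommMonoid T] [Module K T]
    (b : Module.Basis ι K H) (g : H →ₗ[K] H →ₗ[K] T) (w v : H) :
    ∑ i, b.coord i w • g (b i) v = g w v := by
  have := sum_coord_smul K H b (g.flip v) w
  simpa using this

/-- The common value of both sides of the pentagon identity, as a linear map. -/
noncomputable def Lam (b : Module.Basis ι K H) (ψ : Module.Dual K H) :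
    H ⊗[K] H →ₗ[K] (D K H ⊗[K] D K H) ⊗[K] D K H :=
  TensorProduct.lift <| LinearMap.mk₂ K
    (fun u v => ∑ j, gammaB K H (b.coord j) ψ (b j * u) v)
    (fun u u' v => by
      simp [mul_add, map_add, LinearMap.add_apply, Finset.sum_add_distrib])
    (fun s u v => by simp [mul_smul_comm, map_smul, Finset.smul_sum])
    (fun u v v' => by simp [map_add, Finset.sum_add_distrib])
    (fun s u v => by simp [map_smul, Finset.smul_sum])

lemma Lam_tmul (b : Module.Basis ι K H) (ψ : Module.Dual K H) (u v : H) :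
    Lam K H b ψ (u ⊗ₜ v) = ∑ j, gammaB K H (b.coord j) ψ (b j * u) v := rfl

end HeisenbergDouble
namespace HeisenbergDouble
set_option maxHeartbeats 1000000
set_option synthInstance.maxHeartbeats 400000
set_option linter.unusedSectionVars false

variable (K H : Type*) [Field K] [Ring H] [HopfAlgebra K H] [FiniteDimensional K H]
variable {ι : Type*} [Fintype ι]

lemma claimA (b : Module.Basis ι K H) (k : ι) (z : H ⊗[K] H) :
    ∑ i, ((((Coalgebra.counit (R := K) (A := H)) ⊗ₜ b i) ⊗ₜ
        hmulAux K H (Coalgebra.counit (R := K)) (b.coord i) 1 z) ⊗ₜ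
        (((b.coord k : Module.Dual K H)) ⊗ₜ (1 : H)))
      = Lam K H b (b.coord k) z := by
  induction z using TensorProduct.induction_on with
  | zero => simp
  | add x y hx hy => simp only [map_add, tmul_add, add_tmul, Finset.sum_add_distrib, hx, hy]
  | tmul u v =>
    have hact : ∀ i : ι, actB K H u (b.coord i)
        = ∑ j, (b.coord i (b j * u)) • (b.coord j : Module.Dual K H) := by
      intro i
      conv_lhs => rw [← b.sum_dual_apply_smul_coord (actB K H u (b.coord i))]
      simp [actB]
    simp only [hmulAux_tmul, dmulB_counit_left, mul_one, hact]
    simp only [sum_tmul, tmul_sum, ← smul_tmul', tmul_smul, Finset.smul_sum]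
    rw [Lam_tmul]
    trans (∑ j : ι, ∑ i : ι, (b.coord i) (b j * u) •
      ((((Coalgebra.counit (R := K) (A := H)) ⊗ₜ[K] b i) ⊗ₜ[K]
        ((b.coord j : Module.Dual K H) ⊗ₜ[K] v)) ⊗ₜ[K]
        ((b.coord k : Module.Dual K H) ⊗ₜ[K] (1 : H)) : (D K H ⊗[K] D K H) ⊗[K] D K H))
    · exact Finset.sum_comm
    refine Finset.sum_congr rfl fun j _ => ?_
    have h := sum_coord_smul_apply K H b (gammaB K H (b.coord j) (b.coord k)) (b j * u) v
    simp only [gammaB_apply] at h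
    exact h
end HeisenbergDouble
namespace HeisenbergDouble
set_option maxHeartbeats 1000000
set_option synthInstance.maxHeartbeats 400000
set_option linter.unusedSectionVars false

variable (K H : Type*) [Field K] [Ring H] [HopfAlgebra K H] [FiniteDimensional K H]
variable {ι : Type*} [Fintype ι]

lemma claimB (b : Module.Basis ι K H) (l : ι) (z : H ⊗[K] H) :
    ∑ i, ∑ j, ∑ k, (LinearMap.mul' K K (TensorProduct.map (b.coord j) (b.coord k) z)) •
        ((((Coalgebra.counit (R := K) (A := H)) ⊗ₜ (b i * b j)) ⊗ₜ
          ((b.coord i : Module.Dual K H) ⊗ₜ b k)) ⊗ₜ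
          ((b.coord l : Module.Dual K H) ⊗ₜ (1 : H)))
      = Lam K H b (b.coord l) z := by
  induction z using TensorProduct.induction_on with
  | zero => simp
  | add x y hx hy => simp only [map_add, add_smul, Finset.sum_add_distrib, hx, hy]
  | tmul u v =>
    simp only [TensorProduct.map_tmul, LinearMap.mul'_apply]
    rw [Lam_tmul]
    refine Finset.sum_congr rfl fun i _ => ?_
    have h1 : ∀ j : ι, ∑ k, (b.coord k v) •
        ((((Coalgebra.counit (R := K) (A := H)) ⊗ₜ (b i * b j)) ⊗ₜ
          ((b.coord i : Module.Dual K H) ⊗ₜ b k)) ⊗ₜ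
          ((b.coord l : Module.Dual K H) ⊗ₜ (1 : H)))
        = gammaB K H (b.coord i) (b.coord l) (b i * b j) v := by
      intro j
      have := sum_coord_smul K H b (gammaB K H (b.coord i) (b.coord l) (b i * b j)) v
      simpa only [gammaB_apply] using this
    have h2 := sum_coord_smul_apply K H b
      ((gammaB K H (b.coord i) (b.coord l)) ∘ₗ LinearMap.mulLeft K (b i)) u v
    simp only [LinearMap.comp_apply, LinearMap.mulLeft_apply] at h2
    calc ∑ j, ∑ k, (b.coord j u * b.coord k v) •
          ((((Coalgebra.counit (R := K) (A := H)) ⊗ₜ (b i * b j)) ⊗ₜ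
            ((b.coord i : Module.Dual K H) ⊗ₜ b k)) ⊗ₜ
            ((b.coord l : Module.Dual K H) ⊗ₜ (1 : H)))
        = ∑ j, (b.coord j u) • gammaB K H (b.coord i) (b.coord l) (b i * b j) v := by
          refine Finset.sum_congr rfl fun j _ => ?_
          rw [← h1 j, Finset.smul_sum]
          simp [mul_smul]
      _ = gammaB K H (b.coord i) (b.coord l) (b i * u) v := h2
      _ = (((Coalgebra.counit (R := K) (A := H)) ⊗ₜ (b i * u)) ⊗ₜ
            ((b.coord i : Module.Dual K H) ⊗ₜ v)) ⊗ₜ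
            ((b.coord l : Module.Dual K H) ⊗ₜ (1 : H)) := rfl

end HeisenbergDouble
namespace HeisenbergDouble
set_option maxHeartbeats 1000000
set_option synthInstance.maxHeartbeats 400000
set_option linter.unusedSectionVars false

variable (K H : Type*) [Field K] [Ring H] [HopfAlgebra K H] [FiniteDimensional K H]

lemma hmul3_sum_left {α : Type*} (s : Finset α) (f : α → (D K H ⊗[K] D K H) ⊗[K] D K H)
    (y : (D K H ⊗[K] D K H) ⊗[K] D K H) :
    hmul3 K H (∑ a ∈ s, f a) y = ∑ a ∈ s, hmul3 K H (f a) y := by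
  simp [hmul3, sum_tmul, map_sum]

lemma hmul3_sum_right {α : Type*} (s : Finset α) (x : (D K H ⊗[K] D K H) ⊗[K] D K H)
    (f : α → (D K H ⊗[K] D K H) ⊗[K] D K H) :
    hmul3 K H x (∑ a ∈ s, f a) = ∑ a ∈ s, hmul3 K H x (f a) := by
  simp [hmul3, tmul_sum, map_sum]

lemma hmul3_tmul (p q r p' q' r' : D K H) :
    hmul3 K H ((p ⊗ₜ q) ⊗ₜ r) ((p' ⊗ₜ q') ⊗ₜ r') =
      (hmulT K H (p ⊗ₜ p') ⊗ₜ hmulT K H (q ⊗ₜ q')) ⊗ₜ hmulT K H (r ⊗ₜ r') := by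
  simp [hmul3, TensorProduct.tensorTensorTensorComm_tmul]

lemma sum_rev4 {M : Type*} [AddCommMonoid M] {α β γ δ : Type*}
    [Fintype α] [Fintype β] [Fintype γ] [Fintype δ] (f : α → β → γ → δ → M) :
    ∑ k, ∑ j, ∑ i, ∑ l, f k j i l = ∑ l, ∑ i, ∑ j, ∑ k, f k j i l := by
  calc ∑ k, ∑ j, ∑ i, ∑ l, f k j i l
      = ∑ k, ∑ j, ∑ l, ∑ i, f k j i l :=
        Finset.sum_congr rfl fun k _ => Finset.sum_congr rfl fun j _ => Finset.sum_comm
    _ = ∑ k, ∑ l, ∑ j, ∑ i, f k j i l :=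
        Finset.sum_congr rfl fun k _ => Finset.sum_comm
    _ = ∑ l, ∑ k, ∑ j, ∑ i, f k j i l := Finset.sum_comm
    _ = ∑ l, ∑ k, ∑ i, ∑ j, f k j i l :=
        Finset.sum_congr rfl fun l _ => Finset.sum_congr rfl fun k _ => Finset.sum_comm
    _ = ∑ l, ∑ i, ∑ k, ∑ j, f k j i l :=
        Finset.sum_congr rfl fun l _ => Finset.sum_comm
    _ = ∑ l, ∑ i, ∑ j, ∑ k, f k j i l :=
        Finset.sum_congr rfl fun l _ => Finset.sum_congr rfl fun i _ => Finset.sum_comm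

end HeisenbergDouble
set_option maxHeartbeats 4000000
set_option synthInstance.maxHeartbeats 400000

open HeisenbergDouble in
/-- The canonical element `T = Σᵢ (ε ⊗ eᵢ) ⊗ (eⁱ ⊗ 1)` of the Heisenberg double of a
finite-dimensional Hopf algebra satisfies the pentagon equation
`T₁₂ T₁₃ T₂₃ = T₂₃ T₁₂` in `H(H)^⊗3`. -/
theorem canonical_element_pentagon_equation
    (K H : Type*) [Field K] [Ring H] [HopfAlgebra K H] [FiniteDimensional K H]
    (ι : Type*) [Fintype ι] (b : Module.Basis ι K H) :
    hmul3 K H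
        (hmul3 K H
          (∑ i, ((Coalgebra.counit (R := K) (A := H) ⊗ₜ b i) ⊗ₜ
              ((b.coord i : Module.Dual K H) ⊗ₜ (1 : H))) ⊗ₜ hunit K H)
          (∑ i, (((Coalgebra.counit (R := K) (A := H) ⊗ₜ b i) : D K H) ⊗ₜ hunit K H) ⊗ₜ
              (((b.coord i : Module.Dual K H) ⊗ₜ (1 : H)) : D K H)))
        (∑ i, ((hunit K H) ⊗ₜ ((Coalgebra.counit (R := K) (A := H) ⊗ₜ b i) : D K H)) ⊗ₜ
            (((b.coord i : Module.Dual K H) ⊗ₜ (1 : H)) : D K H)) =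
      hmul3 K H
        (∑ i, ((hunit K H) ⊗ₜ ((Coalgebra.counit (R := K) (A := H) ⊗ₜ b i) : D K H)) ⊗ₜ
            (((b.coord i : Module.Dual K H) ⊗ₜ (1 : H)) : D K H))
        (∑ i, (((Coalgebra.counit (R := K) (A := H) ⊗ₜ b i) : D K H) ⊗ₜ
            ((b.coord i : Module.Dual K H) ⊗ₜ (1 : H))) ⊗ₜ hunit K H) := by
  classical
  simp only [hmul3_sum_left, hmul3_sum_right, hmul3_tmul, hmulT_eps_eps, hmulT_unit_right,
    hmulT_unit_left, hmulT_one_left, dmulB_counit_right]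
  simp only [hmulT_tmul]
  have hdual : ∀ j k : ι, (dmulB K H (b.coord j) (b.coord k) : Module.Dual K H)
      = ∑ l, (LinearMap.mul' K K (TensorProduct.map (b.coord j) (b.coord k)
          (Coalgebra.comul (b l)))) • (b.coord l : Module.Dual K H) := by
    intro j k
    conv_lhs => rw [← b.sum_dual_apply_smul_coord (dmulB K H (b.coord j) (b.coord k))]
    simp only [dmulB_apply]
  trans (∑ l : ι, Lam K H b (b.coord l) (Coalgebra.comul (b l)))
  · simp only [hdual]
    simp only [sum_tmul, ← smul_tmul', tmul_smul, tmul_sum]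
    rw [sum_rev4]
    exact Finset.sum_congr rfl fun l _ => claimB K H b l _
  · conv_rhs => rw [Finset.sum_comm]
    exact Finset.sum_congr rfl fun k _ => (claimA K H b k _).symm
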